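/- Let M = (E, 𝓑) be a matroid. If rk(M) ≤ 2 or |E| ≤ 5, then M is 2-level, i.e., Lev(V_M) ≤ 2. -/

import Mathlib

open MvPolynomial Set

noncomputable section

/-- `f` is an affine-linear polynomial (degree at most one). -/
def IsAffLin {ι : Type} (f : MvPolynomial ι ℝ) : Prop := f.totalDegree ≤ 1

/-- `f` is nonnegative on `V`. -/
def NonnegOn {ι : Type} (V : Set (ι → ℝ)) (f : MvPolynomial ι ℝ) : Prop :=
  ∀ v ∈ V, 0 ≤ eval v f

/-- `ℓ` is `k`-sos with respect to `V`: on `V` it agrees with a sum of squares of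
polynomials of degree at most `k`. -/
def IsKSos {ι : Type} (V : Set (ι → ℝ)) (k : ℕ) (ℓ : MvPolynomial ι ℝ) : Prop :=
  ∃ (s : ℕ) (h : Fin s → MvPolynomial ι ℝ),
    (∀ i, (h i).totalDegree ≤ k) ∧ ∀ v ∈ V, eval v ℓ = ∑ i, (eval v (h i)) ^ 2

/-- The Theta rank of a point configuration `V`. -/
def thetaRank {ι : Type} (V : Set (ι → ℝ)) : ℕ :=
  sInf {k | ∀ ℓ, IsAffLin ℓ → NonnegOn V ℓ → IsKSos V k ℓ}

/-- `F` is a face of `V`. -/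
def IsFaceOf {ι : Type} (V F : Set (ι → ℝ)) : Prop :=
  ∃ g, IsAffLin g ∧ NonnegOn V g ∧ F = {v ∈ V | eval v g = 0}

/-- `F` is a facet of `V`: an inclusion-maximal proper face. -/
def IsFacetOf {ι : Type} (V F : Set (ι → ℝ)) : Prop :=
  IsFaceOf V F ∧ F ≠ V ∧ ∀ F', IsFaceOf V F' → F' ≠ V → F ⊆ F' → F' = F

/-- `ℓ` is a facet-defining affine-linear function for `V`. -/
def IsFacetDefining {ι : Type} (V : Set (ι → ℝ)) (ℓ : MvPolynomial ι ℝ) : Prop :=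
  IsAffLin ℓ ∧ NonnegOn V ℓ ∧ IsFacetOf V {v ∈ V | eval v ℓ = 0}

/-- The levelness of a point configuration `V`. -/
def levelness {ι : Type} (V : Set (ι → ℝ)) : ℕ :=
  sInf {k | ∀ ℓ, IsFacetDefining V ℓ → ((fun v => eval v ℓ) '' V).ncard ≤ k}

/-- The base configuration of a matroid: the 0/1 indicator vectors of its bases. -/
def baseConfig {α : Type} (M : Matroid α) : Set (α → ℝ) :=
  {x | ∃ B, M.IsBase B ∧ x = Set.indicator B 1}

lemma finsupp_of_deg_le_one {α : Type} (d : α →₀ ℕ) (hd : (d.sum fun _ n => n) ≤ 1) :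
    d = 0 ∨ ∃ e, d = Finsupp.single e 1 := by
  classical
  rcases d.support.eq_empty_or_nonempty with h | ⟨e, he⟩
  · exact Or.inl (Finsupp.support_eq_empty.mp h)
  · right
    have hsum : (d.sum fun _ n => n) = ∑ a ∈ d.support, d a := rfl
    rw [hsum] at hd
    have hde : 1 ≤ d e := Nat.one_le_iff_ne_zero.mpr (Finsupp.mem_support_iff.mp he)
    have hle : d e ≤ ∑ a ∈ d.support, d a :=
      Finset.single_le_sum (fun i _ => Nat.zero_le _) he
    have hde1 : d e = 1 := le_antisymm (le_trans hle hd) hde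
    refine ⟨e, Finsupp.ext fun i => ?_⟩
    by_cases hie : i = e
    · subst hie; rw [Finsupp.single_eq_same, hde1]
    · rw [Finsupp.single_eq_of_ne' (Ne.symm hie)]
      by_contra hdi0
      have hi : i ∈ d.support := Finsupp.mem_support_iff.mpr hdi0
      have hpair : ({e, i} : Finset α) ⊆ d.support := by
        intro x hx
        rcases Finset.mem_insert.mp hx with rfl | hx
        · exact he
        · rw [Finset.mem_singleton.mp hx]; exact hi
      have h2 : d e + d i ≤ ∑ a ∈ d.support, d a := by
        rw [← Finset.sum_pair (fun h => hie h.symm : e ≠ i)]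
        exact Finset.sum_le_sum_of_subset hpair
      have hdi : 1 ≤ d i := Nat.one_le_iff_ne_zero.mpr hdi0
      omega

lemma eval_affine {α : Type} [Fintype α] (ℓ : MvPolynomial α ℝ) (hℓ : ℓ.totalDegree ≤ 1)
    (x : α → ℝ) :
    eval x ℓ = ℓ.coeff 0 + ∑ e, ℓ.coeff (Finsupp.single e 1) * x e := by
  classical
  rw [eval_eq']
  have hsub : ℓ.support ⊆ insert 0 (Finset.univ.image fun e => Finsupp.single e (1 : ℕ)) := by
    intro d hd
    have hdeg : (d.sum fun _ n => n) ≤ 1 := le_trans (MvPolynomial.le_totalDegree hd) hℓ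
    rcases finsupp_of_deg_le_one d hdeg with rfl | ⟨e, rfl⟩
    · exact Finset.mem_insert_self _ _
    · exact Finset.mem_insert_of_mem (Finset.mem_image_of_mem _ (Finset.mem_univ e))
  rw [Finset.sum_subset hsub (by
    intro d _ hd
    rw [MvPolynomial.notMem_support_iff.mp hd, zero_mul])]
  have h0 : (0 : α →₀ ℕ) ∉ Finset.univ.image (fun e => Finsupp.single e (1 : ℕ)) := by
    simp only [Finset.mem_image, not_exists]
    intro e
    rintro ⟨-, h⟩
    exact (one_ne_zero : (1:ℕ) ≠ 0) (Finsupp.single_eq_zero.mp h)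
  rw [Finset.sum_insert h0, Finset.sum_image (fun a _ b _ h =>
    Finsupp.single_left_injective (one_ne_zero : (1:ℕ) ≠ 0) h)]
  congr 1
  · simp
  · refine Finset.sum_congr rfl fun e _ => ?_
    congr 1
    rw [Finset.prod_eq_single e (fun b _ hb => by
      rw [Finsupp.single_eq_of_ne' (Ne.symm hb), pow_zero]) (fun h => absurd (Finset.mem_univ e) h)]
    rw [Finsupp.single_eq_same, pow_one]

lemma eval_indicator_pair {α : Type} [Fintype α] (ℓ : MvPolynomial α ℝ)
    (hℓ : ℓ.totalDegree ≤ 1) {e f : α} (hef : e ≠ f) :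
    eval (Set.indicator ({e, f} : Set α) (1 : α → ℝ)) ℓ
      = ℓ.coeff 0 + (ℓ.coeff (Finsupp.single e 1) + ℓ.coeff (Finsupp.single f 1)) := by
  classical
  rw [eval_affine ℓ hℓ]
  congr 1
  have key : ∀ x, ℓ.coeff (Finsupp.single x 1) * Set.indicator ({e, f} : Set α) (1 : α → ℝ) x
      = (if x = e then ℓ.coeff (Finsupp.single e 1) else 0)
        + (if x = f then ℓ.coeff (Finsupp.single f 1) else 0) := by
    intro x
    by_cases hxe : x = e
    · subst hxe
      simp [Set.indicator_apply, hef]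
    · by_cases hxf : x = f
      · subst hxf
        simp [Set.indicator_apply, hxe]
      · simp [Set.indicator_apply, hxe, hxf]
  rw [Finset.sum_congr rfl fun x _ => key x, Finset.sum_add_distrib]
  simp

lemma baseConfig_finite {α : Type} [Fintype α] (M : Matroid α) : (baseConfig M).Finite := by
  have hsub : baseConfig M ⊆ (fun B : Set α => Set.indicator B (1 : α → ℝ)) '' Set.univ := by
    rintro x ⟨B, -, rfl⟩
    exact ⟨B, trivial, rfl⟩
  exact Set.Finite.subset (Set.Finite.image _ Set.finite_univ) hsub

def reflectPoly {α : Type} [Fintype α] (w : α → ℝ) (ℓ : MvPolynomial α ℝ) : MvPolynomial α ℝ :=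
  MvPolynomial.C (eval w ℓ) - ∑ e, MvPolynomial.C (ℓ.coeff (Finsupp.single e 1)) * MvPolynomial.X e

lemma reflectPoly_affine {α : Type} [Fintype α] (w : α → ℝ) (ℓ : MvPolynomial α ℝ) :
    IsAffLin (reflectPoly w ℓ) := by
  refine le_trans (MvPolynomial.totalDegree_sub _ _) (max_le (by simp) ?_)
  refine le_trans (MvPolynomial.totalDegree_finset_sum _ _) (Finset.sup_le fun e _ => ?_)
  refine le_trans (MvPolynomial.totalDegree_mul _ _) ?_
  simp [MvPolynomial.totalDegree_X]

lemma reflectPoly_eval {α : Type} [Fintype α] (w : α → ℝ) (ℓ : MvPolynomial α ℝ)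
    (hℓ : ℓ.totalDegree ≤ 1) (x : α → ℝ) :
    eval x (reflectPoly w ℓ) = eval (fun e => w e - x e) ℓ := by
  simp only [reflectPoly, map_sub, eval_C, map_sum, map_mul, eval_X]
  rw [eval_affine ℓ hℓ (fun e => w e - x e), eval_affine ℓ hℓ w]
  have hsum : ∑ e, ℓ.coeff (Finsupp.single e 1) * (w e - x e)
      = ∑ e, ℓ.coeff (Finsupp.single e 1) * w e - ∑ e, ℓ.coeff (Finsupp.single e 1) * x e := by
    rw [← Finset.sum_sub_distrib]
    exact Finset.sum_congr rfl fun e _ => by ring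
  rw [hsum]
  ring

lemma indicator_compl_sub {α : Type} (B E : Set α) (hBE : B ⊆ E) :
    (fun e => Set.indicator E (1 : α → ℝ) e - Set.indicator B (1 : α → ℝ) e)
      = Set.indicator (E \ B) (1 : α → ℝ) := by
  classical
  funext e
  by_cases h1 : e ∈ B
  · have h2 := hBE h1
    simp [Set.indicator_apply, h1, h2]
  · by_cases h2 : e ∈ E <;> simp [Set.indicator_apply, h1, h2]

lemma main_rank_le_two {α : Type} [Fintype α] (M : Matroid α)
    (hB2 : ∀ B, M.IsBase B → B.ncard ≤ 2) (ℓ : MvPolynomial α ℝ)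
    (hfd : IsFacetDefining (baseConfig M) ℓ) :
    ((fun v => eval v ℓ) '' baseConfig M).ncard ≤ 2 := by
  classical
  obtain ⟨hAff, hNonneg, hFaceF, hFne, hFmax⟩ := hfd
  by_contra hS
  push_neg at hS
  set S := (fun v => eval v ℓ) '' baseConfig M with hSdef
  set φ : Set α → ℝ := fun B => eval (Set.indicator B (1 : α → ℝ)) ℓ with hφdef
  have hmem : ∀ {B}, M.IsBase B → Set.indicator B (1 : α → ℝ) ∈ baseConfig M :=
    fun hB => ⟨_, hB, rfl⟩
  have hφS : ∀ {B}, M.IsBase B → φ B ∈ S := fun hB => ⟨_, hmem hB, rfl⟩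
  have hφnn : ∀ {B}, M.IsBase B → 0 ≤ φ B := fun hB => hNonneg _ (hmem hB)
  have hSfin : S.Finite := (baseConfig_finite M).image _
  -- Every element of a base lies in some base on which ℓ vanishes.
  have star : ∀ e B, M.IsBase B → e ∈ B → ∃ Z, M.IsBase Z ∧ e ∈ Z ∧ φ Z = 0 := by
    intro e B hB heB
    by_contra hno
    push_neg at hno
    have hpos : ∀ Z, M.IsBase Z → e ∈ Z → 0 < φ Z :=
      fun Z hZ heZ => lt_of_le_of_ne (hφnn hZ) (Ne.symm (hno Z hZ heZ))
    set T : Set ℝ := {r | ∃ Z, M.IsBase Z ∧ e ∈ Z ∧ φ Z = r} with hTdef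
    have hTS : T ⊆ S := by rintro r ⟨Z, hZ, -, rfl⟩; exact hφS hZ
    obtain ⟨t, htT, htmin⟩ := Set.exists_min_image T id (hSfin.subset hTS) ⟨φ B, B, hB, heB, rfl⟩
    obtain ⟨Z₀, hZ₀, heZ₀, hφZ₀⟩ := htT
    have ht0 : 0 < t := hφZ₀ ▸ hpos Z₀ hZ₀ heZ₀
    set g : MvPolynomial α ℝ := ℓ - MvPolynomial.C t * MvPolynomial.X e with hgdef
    have hgAff : IsAffLin g := by
      refine le_trans (MvPolynomial.totalDegree_sub _ _) (max_le hAff ?_)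
      refine le_trans (MvPolynomial.totalDegree_mul _ _) ?_
      simp [MvPolynomial.totalDegree_X]
    have hgval : ∀ B' : Set α, eval (Set.indicator B' (1 : α → ℝ)) g
        = φ B' - t * (if e ∈ B' then 1 else 0) := by
      intro B'
      simp [hgdef, hφdef, Set.indicator_apply]
    have hgnn : NonnegOn (baseConfig M) g := by
      rintro v ⟨B', hB', rfl⟩
      rw [hgval]
      by_cases heB' : e ∈ B'
      · have hmin := htmin (φ B') ⟨B', hB', heB', rfl⟩
        simp only [heB', if_true, id] at hmin ⊢
        linarith
      · simp only [heB', if_false]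
        linarith [hφnn hB']
    have hF'face : IsFaceOf (baseConfig M) {v ∈ baseConfig M | eval v g = 0} :=
      ⟨g, hgAff, hgnn, rfl⟩
    have hFF' : {v ∈ baseConfig M | eval v ℓ = 0} ⊆ {v ∈ baseConfig M | eval v g = 0} := by
      rintro v ⟨⟨B', hB', rfl⟩, hv0⟩
      refine ⟨⟨B', hB', rfl⟩, ?_⟩
      have heB' : e ∉ B' := fun heB' => (hpos B' hB' heB').ne' hv0
      rw [hgval]
      simp only [heB', if_false]
      rw [show φ B' = 0 from hv0]
      ring
    have hne' : {v ∈ baseConfig M | eval v g = 0} ≠ baseConfig M := by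
      intro hEq
      have hsub : S ⊆ {0, t} := by
        rintro r ⟨v, hv, rfl⟩
        obtain ⟨B', hB', rfl⟩ := hv
        have hv' : eval (Set.indicator B' (1 : α → ℝ)) g = 0 :=
          ((Set.ext_iff.mp hEq _).mpr (hmem hB')).2
        rw [hgval] at hv'
        by_cases heB' : e ∈ B'
        · simp only [heB', if_true] at hv'
          right
          simp only [Set.mem_singleton_iff]
          show φ B' = t
          linarith
        · simp only [heB', if_false] at hv'
          left
          show φ B' = 0
          linarith
      have : S.ncard ≤ 2 := by
        refine le_trans (Set.ncard_le_ncard hsub (by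
          exact Set.Finite.insert _ (Set.finite_singleton _))) ?_
        refine le_trans (Set.ncard_insert_le _ _) ?_
        simp
      omega
    have hF'F := hFmax _ hF'face hne' hFF'
    have hZmem : Set.indicator Z₀ (1 : α → ℝ) ∈ {v ∈ baseConfig M | eval v g = 0} := by
      refine ⟨hmem hZ₀, ?_⟩
      rw [hgval]
      simp only [heZ₀, if_true]
      rw [show φ Z₀ = t from hφZ₀]
      ring
    rw [hF'F] at hZmem
    exact (hpos Z₀ hZ₀ heZ₀).ne' hZmem.2
  -- case split on base sizes
  set a : α → ℝ := fun e => ℓ.coeff (Finsupp.single e 1) with hadef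
  set c : ℝ := ℓ.coeff 0 with hcdef
  have φpair : ∀ {e f : α}, e ≠ f → φ {e, f} = c + (a e + a f) :=
    fun hef => eval_indicator_pair ℓ hAff hef
  by_cases hall : ∀ B, M.IsBase B → B.ncard = 2
  · -- all bases have two elements
    have claim1 : ∀ e f, e ≠ f → M.IsBase {e, f} → 0 < φ {e, f} → a e = a f := by
      intro e f hef hB hpos
      obtain ⟨Ze, hZe, heZe, hφZe⟩ := star e {e, f} hB (Set.mem_insert e _)
      obtain ⟨Zf, hZf, hfZf, hφZf⟩ := star f {e, f} hB (Set.mem_insert_of_mem _ rfl)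
      have hpairE : ∃ e', e ≠ e' ∧ Ze = {e, e'} := by
        obtain ⟨p, q, hpq, rfl⟩ := Set.ncard_eq_two.mp (hall Ze hZe)
        rcases heZe with rfl | hq
        · exact ⟨q, hpq, rfl⟩
        · rw [Set.mem_singleton_iff.mp hq]
          exact ⟨p, hpq.symm, Set.pair_comm p q⟩
      have hpairF : ∃ f', f ≠ f' ∧ Zf = {f, f'} := by
        obtain ⟨p, q, hpq, rfl⟩ := Set.ncard_eq_two.mp (hall Zf hZf)
        rcases hfZf with rfl | hq
        · exact ⟨q, hpq, rfl⟩
        · rw [Set.mem_singleton_iff.mp hq]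
          exact ⟨p, hpq.symm, Set.pair_comm p q⟩
      obtain ⟨e', hee', rfl⟩ := hpairE
      obtain ⟨f', hff', rfl⟩ := hpairF
      have h0e : c + (a e + a e') = 0 := by rw [← φpair hee']; exact hφZe
      have h0f : c + (a f + a f') = 0 := by rw [← φpair hff']; exact hφZf
      rw [φpair hef] at hpos
      have hef' : e ≠ f' := by
        rintro rfl
        linarith
      have hfe' : f ≠ e' := by
        rintro rfl
        linarith
      by_cases he'f' : e' = f'
      · subst he'f'
        linarith
      · have hde : e ∈ ({e, e'} : Set α) \ ({f, f'} : Set α) := by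
          refine ⟨Set.mem_insert _ _, ?_⟩
          rintro (rfl | h)
          · exact hef rfl
          · exact hef' (Set.mem_singleton_iff.mp h)
        obtain ⟨y, hy, hBy⟩ := hZe.exchange hZf hde
        rw [Set.pair_diff_left hee'] at hBy
        have h1 : a e ≤ a f := by
          have hyy : y = f ∨ y = f' := by simpa using hy.1
          rcases hyy with rfl | rfl
          · -- y = f : base {f, e'}
            have hne : y ≠ e' := hfe'
            have := hφnn hBy
            rw [show (insert y {e'} : Set α) = {y, e'} from rfl, φpair hne] at this
            linarith
          · -- y = f' : base {f', e'}, value negative, contradiction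
            have hne : y ≠ e' := fun h => he'f' h.symm
            have := hφnn hBy
            rw [show (insert y {e'} : Set α) = {y, e'} from rfl, φpair hne] at this
            linarith
        have hdf : f ∈ ({f, f'} : Set α) \ ({e, e'} : Set α) := by
          refine ⟨Set.mem_insert _ _, ?_⟩
          rintro (rfl | h)
          · exact hef rfl
          · exact hfe' (Set.mem_singleton_iff.mp h)
        obtain ⟨y', hy', hBy'⟩ := hZf.exchange hZe hdf
        rw [Set.pair_diff_left hff'] at hBy'
        have h2 : a f ≤ a e := by
          have hyy' : y' = e ∨ y' = e' := by simpa using hy'.1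
          rcases hyy' with rfl | rfl
          · have hne : y' ≠ f' := hef'
            have := hφnn hBy'
            rw [show (insert y' {f'} : Set α) = {y', f'} from rfl, φpair hne] at this
            linarith
          · have hne : y' ≠ f' := he'f'
            have := hφnn hBy'
            rw [show (insert y' {f'} : Set α) = {y', f'} from rfl, φpair hne] at this
            linarith
        linarith
    -- find two distinct positive values
    have hSnn : ∀ r ∈ S, 0 ≤ r := by rintro r ⟨v, hv, rfl⟩; exact hNonneg v hv
    obtain ⟨P, hPS, hP3⟩ := Set.exists_subset_card_eq (show 3 ≤ S.ncard by omega)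
    obtain ⟨x, y, z, hxy, hxz, hyz, rfl⟩ := Set.ncard_eq_three.mp hP3
    have hxS : x ∈ S := hPS (by simp)
    have hyS : y ∈ S := hPS (by simp)
    have hzS : z ∈ S := hPS (by simp)
    have hselect : ∀ p q : ℝ, p ∈ S → q ∈ S → p ≠ q → p ≠ 0 → q ≠ 0 →
        ∃ u w, u ∈ S ∧ w ∈ S ∧ 0 < u ∧ u < w := by
      intro p q hp hq hpq hp0 hq0
      rcases lt_or_gt_of_ne hpq with hlt | hgt
      · exact ⟨p, q, hp, hq, lt_of_le_of_ne (hSnn p hp) (Ne.symm hp0), hlt⟩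
      · exact ⟨q, p, hq, hp, lt_of_le_of_ne (hSnn q hq) (Ne.symm hq0), hgt⟩
    have hpick : ∃ u w, u ∈ S ∧ w ∈ S ∧ 0 < u ∧ u < w := by
      by_cases hx0 : x = 0
      · exact hselect y z hyS hzS hyz (fun h0 => hxy (by rw [hx0, h0]))
          (fun h0 => hxz (by rw [hx0, h0]))
      · by_cases hy0 : y = 0
        · exact hselect x z hxS hzS hxz hx0 (fun h0 => hyz (by rw [hy0, h0]))
        · exact hselect x y hxS hyS hxy hx0 hy0
    obtain ⟨u, w, huS, hwS, hu0, huw⟩ := hpick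
    obtain ⟨v1, hv1, hv1u⟩ := huS
    obtain ⟨B1, hB1, rfl⟩ := hv1
    obtain ⟨v2, hv2, hv2w⟩ := hwS
    obtain ⟨B2, hB2', rfl⟩ := hv2
    obtain ⟨e, f, hef, rfl⟩ := Set.ncard_eq_two.mp (hall B1 hB1)
    obtain ⟨g, h', hgh, rfl⟩ := Set.ncard_eq_two.mp (hall B2 hB2')
    have hφ1 : φ {e, f} = u := hv1u
    have hφ2 : φ {g, h'} = w := hv2w
    have hae : a e = a f := claim1 e f hef hB1 (by rw [hφ1]; exact hu0)
    have hag : a g = a h' := claim1 g h' hgh hB2' (by rw [hφ2]; linarith)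
    have hu' : c + (a e + a f) = u := by rw [← φpair hef]; exact hφ1
    have hw' : c + (a g + a h') = w := by rw [← φpair hgh]; exact hφ2
    have haeg : a e < a g := by linarith
    have hgef : g ∉ ({e, f} : Set α) := by
      intro hg
      have hgg : g = e ∨ g = f := by simpa using hg
      rcases hgg with rfl | rfl
      · linarith
      · linarith
    obtain ⟨y', hy', hBy'⟩ := hB2'.exchange hB1 ⟨Set.mem_insert _ _, hgef⟩
    rw [Set.pair_diff_left hgh] at hBy'
    have hyh : y' ≠ h' := by
      rintro rfl
      exact hy'.2 (Set.mem_insert_of_mem _ rfl)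
    have hay : a y' = a e := by
      have hyy' : y' = e ∨ y' = f := by simpa using hy'.1
      rcases hyy' with rfl | rfl
      · rfl
      · exact hae.symm
    have hpos' : 0 < φ {y', h'} := by
      rw [φpair hyh]
      linarith
    have hfin := claim1 y' h' hyh (by
      rw [show (insert y' {h'} : Set α) = {y', h'} from rfl] at hBy'
      exact hBy') hpos'
    rw [hay] at hfin
    linarith
  · -- some base has at most one element
    push_neg at hall
    obtain ⟨B₀, hB₀, hB₀ne⟩ := hall
    have hB₀1 : B₀.ncard ≤ 1 := by
      have := hB2 B₀ hB₀
      omega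
    have hall1 : ∀ B, M.IsBase B → B.ncard ≤ 1 := by
      intro B hB
      by_contra hgt
      have hBc2 : B.ncard = 2 := le_antisymm (hB2 B hB) (by omega)
      obtain ⟨p, q, hpq, rfl⟩ := Set.ncard_eq_two.mp hBc2
      have hxz : ∃ x z : α, x ≠ z ∧ ({p, q} : Set α) = {x, z} ∧ x ∉ B₀ := by
        by_cases hpB : p ∈ B₀
        · refine ⟨q, p, hpq.symm, Set.pair_comm p q, fun hqB => ?_⟩
          have hsub : ({p, q} : Set α) ⊆ B₀ := by
            rintro x (rfl | hx)
            · exact hpB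
            · rw [Set.mem_singleton_iff.mp hx]; exact hqB
          have h2 : 2 ≤ B₀.ncard := by
            rw [← Set.ncard_pair hpq]
            exact Set.ncard_le_ncard hsub (Set.toFinite B₀)
          omega
        · exact ⟨p, q, hpq, rfl, hpB⟩
      obtain ⟨x, z, hxzne, hBxz, hxB₀⟩ := hxz
      have hBxz' : M.IsBase ({x, z} : Set α) := hBxz ▸ hB
      obtain ⟨u, hu, hBu⟩ := hBxz'.exchange hB₀ ⟨Set.mem_insert _ _, hxB₀⟩
      have hB₀u : B₀ = {u} := by
        have h1 : B₀.ncard = 1 := by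
          have hpos : 0 < B₀.ncard := (Set.ncard_pos (Set.toFinite B₀)).mpr ⟨u, hu.1⟩
          omega
        obtain ⟨b, hb⟩ := Set.ncard_eq_one.mp h1
        rw [hb] at hu ⊢
        rw [Set.mem_singleton_iff.mp hu.1]
      rw [Set.pair_diff_left hxzne] at hBu
      have hzu : z ≠ u := by
        rintro rfl
        exact hu.2 (Set.mem_insert_of_mem _ rfl)
      obtain ⟨y, hy, -⟩ := hBu.exchange hB₀
        ⟨Set.mem_insert_of_mem _ rfl, by rw [hB₀u]; simpa using hzu⟩
      rw [hB₀u] at hy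
      have hyu : y = u := Set.mem_singleton_iff.mp hy.1
      exact hy.2 (hyu ▸ Set.mem_insert u {z})
    by_cases hemp : M.IsBase ∅
    · have hallemp : ∀ B, M.IsBase B → B = ∅ := by
        intro B hB
        by_contra hne
        obtain ⟨x, hx⟩ := Set.nonempty_iff_ne_empty.mpr hne
        obtain ⟨y, hy, -⟩ := hB.exchange hemp ⟨hx, Set.notMem_empty x⟩
        exact (Set.notMem_empty y) hy.1
      have hsub : S ⊆ {eval (Set.indicator (∅ : Set α) (1 : α → ℝ)) ℓ} := by
        rintro r ⟨v, ⟨B, hB, rfl⟩, rfl⟩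
        simp only [Set.mem_singleton_iff]
        rw [hallemp B hB]
      have : S.ncard ≤ 1 :=
        le_trans (Set.ncard_le_ncard hsub (Set.finite_singleton _)) (by simp)
      omega
    · have hsub : S ⊆ {0} := by
        rintro r ⟨v, ⟨B, hB, rfl⟩, rfl⟩
        simp only [Set.mem_singleton_iff]
        have h1 : B.ncard = 1 := by
          have hle := hall1 B hB
          have hpos : 0 < B.ncard := by
            rcases Set.eq_empty_or_nonempty B with rfl | hne
            · exact absurd hB hemp
            · exact (Set.ncard_pos (Set.toFinite B)).mpr hne
          omega
        obtain ⟨e, rfl⟩ := Set.ncard_eq_one.mp h1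
        obtain ⟨Z, hZ, heZ, hφZ⟩ := star e {e} hB rfl
        have hZ1 : Z.ncard = 1 := by
          have hle := hall1 Z hZ
          have hpos : 0 < Z.ncard := (Set.ncard_pos (Set.toFinite Z)).mpr ⟨e, heZ⟩
          omega
        obtain ⟨e', rfl⟩ := Set.ncard_eq_one.mp hZ1
        have hee : e' = e := (Set.mem_singleton_iff.mp heZ).symm
        subst hee
        exact hφZ
      have : S.ncard ≤ 1 :=
        le_trans (Set.ncard_le_ncard hsub (Set.finite_singleton _)) (by simp)
      omega

/-- A matroid on a finite ground set whose rank (the common cardinality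
of its bases) is at most `2`, or whose ground set has at most `5` elements, is 2-level. -/
theorem two_level_of_small_rank_or_ground {α : Type} [Fintype α] (M : Matroid α)
    (h : (∀ B, M.IsBase B → B.ncard ≤ 2) ∨ M.E.ncard ≤ 5) :
    levelness (baseConfig M) ≤ 2 := by
  classical
  have key : ∀ ℓ, IsFacetDefining (baseConfig M) ℓ →
      ((fun v => eval v ℓ) '' baseConfig M).ncard ≤ 2 := by
    intro ℓ hℓ
    by_cases h2 : ∀ B, M.IsBase B → B.ncard ≤ 2
    · exact main_rank_le_two M h2 ℓ hℓ
    · rcases h with h2' | h5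
      · exact absurd h2' h2
      push_neg at h2
      obtain ⟨B₀, hB₀, hB₀3⟩ := h2
      have hdual2 : ∀ B, M✶.IsBase B → B.ncard ≤ 2 := by
        intro B hB
        obtain ⟨hcompl, hBE⟩ := Matroid.dual_isBase_iff'.mp hB
        have hcard : (M.E \ B).ncard = B₀.ncard := hcompl.ncard_eq_ncard_of_isBase hB₀
        have hsum : (M.E \ B).ncard + B.ncard = M.E.ncard :=
          Set.ncard_diff_add_ncard_of_subset hBE (Set.toFinite _)
        omega
      obtain ⟨hAff, hNonneg, hFaceF, hFne, hFmax⟩ := hℓ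
      set w : α → ℝ := Set.indicator M.E (1 : α → ℝ) with hwdef
      set T : (α → ℝ) → (α → ℝ) := fun v e => w e - v e with hTdef
      have hTT : ∀ v : α → ℝ, T (T v) = v := by
        intro v; funext e; simp [hTdef]
      have hfwd : ∀ v ∈ baseConfig M, T v ∈ baseConfig M✶ := by
        rintro v ⟨B, hB, rfl⟩
        exact ⟨M.E \ B, hB.compl_isBase_dual,
          indicator_compl_sub B M.E hB.subset_ground⟩
      have hbwd : ∀ v ∈ baseConfig M✶, T v ∈ baseConfig M := by
        rintro v ⟨B, hB, rfl⟩
        obtain ⟨hcompl, hBE⟩ := Matroid.dual_isBase_iff'.mp hB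
        exact ⟨M.E \ B, hcompl, indicator_compl_sub B M.E hBE⟩
      set ℓs := reflectPoly w ℓ with hℓsdef
      have hevs : ∀ x, eval x ℓs = eval (T x) ℓ := fun x => reflectPoly_eval w ℓ hAff x
      have hNN : NonnegOn (baseConfig M✶) ℓs := by
        intro v hv
        rw [hevs]
        exact hNonneg _ (hbwd v hv)
      have himg : (fun v => eval v ℓ) '' baseConfig M
          = (fun v => eval v ℓs) '' baseConfig M✶ := by
        apply Set.Subset.antisymm
        · rintro r ⟨v, hv, rfl⟩
          exact ⟨T v, hfwd v hv, by simp only [hevs, hTT]⟩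
        · rintro r ⟨v, hv, rfl⟩
          exact ⟨T v, hbwd v hv, (hevs v).symm⟩
      rw [himg]
      refine main_rank_le_two M✶ hdual2 ℓs
        ⟨reflectPoly_affine w ℓ, hNN, ⟨ℓs, reflectPoly_affine w ℓ, hNN, rfl⟩, ?_, ?_⟩
      · -- Fs ≠ V✶
        intro hEq
        apply hFne
        apply Set.Subset.antisymm (Set.sep_subset _ _)
        intro v hv
        refine ⟨hv, ?_⟩
        have h1 : T v ∈ baseConfig M✶ := hfwd v hv
        have h2' : T v ∈ {y ∈ baseConfig M✶ | eval y ℓs = 0} :=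
          (Set.ext_iff.mp hEq (T v)).mpr h1
        have h3 := h2'.2
        rw [hevs, hTT] at h3
        exact h3
      · -- maximality
        intro G hGface hGne hsubG
        obtain ⟨g, hgAff, hgNN, rfl⟩ := hGface
        set gs := reflectPoly w g with hgsdef
        have hevg : ∀ x, eval x gs = eval (T x) g := fun x => reflectPoly_eval w g hgAff x
        have hGnn : NonnegOn (baseConfig M) gs := by
          intro v hv
          rw [hevg]
          exact hgNN _ (hfwd v hv)
        have hGface' : IsFaceOf (baseConfig M) {v ∈ baseConfig M | eval v gs = 0} :=
          ⟨gs, reflectPoly_affine w g, hGnn, rfl⟩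
        have hGne' : {v ∈ baseConfig M | eval v gs = 0} ≠ baseConfig M := by
          intro hEq
          apply hGne
          apply Set.Subset.antisymm (Set.sep_subset _ _)
          intro y hy
          refine ⟨hy, ?_⟩
          have h1 : T y ∈ baseConfig M := hbwd y hy
          have h2' : T y ∈ {v ∈ baseConfig M | eval v gs = 0} :=
            (Set.ext_iff.mp hEq (T y)).mpr h1
          have h3 := h2'.2
          rw [hevg, hTT] at h3
          exact h3
        have hFsubG' : {v ∈ baseConfig M | eval v ℓ = 0}
            ⊆ {v ∈ baseConfig M | eval v gs = 0} := by
          intro v hv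
          refine ⟨hv.1, ?_⟩
          have h1 : T v ∈ {y ∈ baseConfig M✶ | eval y ℓs = 0} :=
            ⟨hfwd v hv.1, by rw [hevs, hTT]; exact hv.2⟩
          have h2' := hsubG h1
          rw [hevg]
          exact h2'.2
        have hGF := hFmax _ hGface' hGne' hFsubG'
        apply Set.Subset.antisymm
        · intro y hy
          refine ⟨hy.1, ?_⟩
          have h1 : T y ∈ {v ∈ baseConfig M | eval v gs = 0} :=
            ⟨hbwd y hy.1, by rw [hevg, hTT]; exact hy.2⟩
          have h2' : T y ∈ {v ∈ baseConfig M | eval v ℓ = 0} := hGF ▸ h1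
          have h3 := h2'.2
          rw [hevs]
          exact h3
        · exact hsubG
  exact Nat.sInf_le key
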